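/- arXiv:1909.02608 — 3 statements merged into one kernel-verified Lean document; each statement's English description precedes it below -/
import Mathlib

section
/- Let f ∈ F_q[x] be a polynomial of degree n and t a positive integer; if t is even assume 4 | (q^n − 1). If f(x^t) is irreducible over F_q, then f(x^{t^r}) is irreducible over F_q for every r ≥ 0. -/
open Polynomial IntermediateField

theorem aux_finrank_restrict {F A L : Type*} [Field F] [Field A] [Field L]
    [Algebra F A] [Algebra A L] [Algebra F L] [IsScalarTower F A L]
    (X : IntermediateField A L) :
    Module.finrank F (X.restrictScalars F) = Module.finrank F X :=
  LinearEquiv.finrank_eq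
    { toFun := fun x => ⟨x.1, x.2⟩
      invFun := fun x => ⟨x.1, x.2⟩
      map_add' := fun _ _ => rfl
      map_smul' := fun _ _ => rfl
      left_inv := fun _ => rfl
      right_inv := fun _ => rfl }

theorem aux_sq_neg_one_map' {K E : Type*} [Field K] [Field E] [Algebra K E]
    (h : IsSquare (-1 : K)) : IsSquare (-1 : E) := by
  obtain ⟨i, hi⟩ := h
  exact ⟨algebraMap K E i, by rw [← map_mul, ← hi, map_neg, map_one]⟩


universe u

theorem aux_sq_neg_one_map {K E : Type*} [Field K] [Field E] [Algebra K E]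
    (h : IsSquare (-1 : K)) : IsSquare (-1 : E) := by
  obtain ⟨i, hi⟩ := h
  exact ⟨algebraMap K E i, by rw [← map_mul, ← hi, map_neg, map_one]⟩

theorem aux_X_pow_sub_C_irreducible {K : Type u} [Field K] {t : ℕ} (ht : t ≠ 0)
    (hi : Even t → IsSquare (-1 : K)) {a : K}
    (ha : ∀ p : ℕ, p.Prime → p ∣ t → ∀ b : K, b ^ p ≠ a) :
    Irreducible (X ^ t - C a) := by
  induction t using induction_on_primes generalizing K a with
  | zero => exact absurd rfl ht
  | one => simpa using irreducible_X_sub_C a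
  | prime_mul p m hp IH =>
    rw [mul_comm]
    apply X_pow_mul_sub_C_irreducible
      (X_pow_sub_C_irreducible_of_prime hp (ha p hp (dvd_mul_right _ _)))
    intro E _ _ x hx
    have hint : IsIntegral K x := not_not.mp fun h2 ↦ by
      simpa only [degree_zero, degree_X_pow_sub_C hp.pos,
        WithBot.natCast_ne_bot] using congr_arg degree (hx.symm.trans (dif_neg h2))
    have hm : m ≠ 0 := by rintro rfl; exact ht (mul_zero p)
    apply IH hm (fun hme ↦ aux_sq_neg_one_map (hi (hme.mul_left p)))
    intro q hq hqm b hb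
    have hnorm : (Algebra.norm K b) ^ q = (-1) ^ p * (-a) := by
      rw [← map_pow, hb, ← IntermediateField.adjoin.powerBasis_gen hint,
        Algebra.PowerBasis.norm_gen_eq_coeff_zero_minpoly]
      simp [IntermediateField.minpoly_gen, hx, coeff_X_pow, hp.ne_zero.symm]
    rcases hp.eq_two_or_odd' with rfl | hpodd
    · have h2 : (Algebra.norm K b) ^ q = -a := by
        rw [hnorm]; ring
      rcases hq.eq_two_or_odd' with rfl | hqodd
      · obtain ⟨i, hi2⟩ := hi (even_two.mul_right m)
        refine ha 2 Nat.prime_two (dvd_mul_right 2 m) (i * Algebra.norm K b) ?_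
        have : i * i = -1 := hi2.symm
        calc (i * Algebra.norm K b) ^ 2 = (i * i) * (Algebra.norm K b) ^ 2 := by ring
        _ = a := by rw [this, h2]; ring
      · refine ha q hq (Dvd.dvd.mul_left hqm 2) (-(Algebra.norm K b)) ?_
        rw [hqodd.neg_pow, h2, neg_neg]
    · refine ha q hq (Dvd.dvd.mul_left hqm p) (Algebra.norm K b) ?_
      rw [hnorm, hpodd.neg_one_pow]; ring

set_option maxHeartbeats 2000000 in
set_option synthInstance.maxHeartbeats 1000000 in
theorem aux_key {F : Type*} [Field F] [Fintype F] (f : Polynomial F) (t : ℕ)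
    (ht : 0 < t) (h4 : Even t → 4 ∣ (Fintype.card F ^ f.natDegree - 1))
    (h : Irreducible (Polynomial.expand F t f)) :
    Irreducible (Polynomial.expand F (t * t) f) := by
  classical
  set n := f.natDegree with hn
  have hexp0 : Polynomial.expand F t f ≠ 0 := h.ne_zero
  have hf0 : f ≠ 0 := fun hf => hexp0 (by rw [hf, map_zero])
  have hdegexp : (Polynomial.expand F t f).natDegree = n * t := natDegree_expand t f
  have hnpos : 0 < n := by
    have := natDegree_pos_iff_degree_pos.mpr (degree_pos_of_irreducible h)
    rw [hdegexp] at this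
    exact Nat.pos_of_ne_zero fun h0 => by simp [h0] at this
  -- the algebraic closure
  set Ω := AlgebraicClosure F
  obtain ⟨β, hβ⟩ : ∃ β : Ω, aeval β (Polynomial.expand F t f) = 0 := by
    refine IsAlgClosed.exists_aeval_eq_zero Ω _ ?_
    rw [degree_eq_natDegree hexp0, hdegexp]
    exact_mod_cast (by positivity : (0:ℕ) < n * t) |>.ne'
  rw [expand_aeval] at hβ
  set b : Ω := β ^ t with hb
  -- integrality and minpoly degrees
  have hintβ : IsIntegral F β := by
    refine (isAlgebraic_iff_isIntegral.mp ⟨Polynomial.expand F t f, hexp0, ?_⟩)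
    rw [expand_aeval]; exact hβ
  have hintb : IsIntegral F b := hintβ.pow t
  have hmβ : (minpoly F β).natDegree = n * t := by
    rw [← minpoly.eq_of_irreducible h (by rw [expand_aeval]; exact hβ)]
    rw [natDegree_mul_C (inv_ne_zero (leadingCoeff_ne_zero.mpr hexp0)), hdegexp]
  -- fields E = F(b), K = E(β)
  set E : IntermediateField F Ω := F⟮b⟯ with hE
  set K : IntermediateField E Ω := E⟮β⟯ with hK
  set bE : E := AdjoinSimple.gen F b with hbE
  set βK : K := AdjoinSimple.gen E β with hβK
  have hintβE : IsIntegral E β := hintβ.tower_top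
  -- β is a root of X^t - C bE over E
  have haevβE : aeval β (X ^ t - C bE : Polynomial E) = 0 := by
    rw [map_sub, map_pow, aeval_X, aeval_C, AdjoinSimple.algebraMap_gen, sub_self]
  have hdvdβE : minpoly E β ∣ X ^ t - C bE := minpoly.dvd E β haevβE
  have hXtb_ne : (X ^ t - C bE : Polynomial E) ≠ 0 := X_pow_sub_C_ne_zero ht bE
  have hdegEK_le : (minpoly E β).natDegree ≤ t := by
    have := natDegree_le_of_dvd hdvdβE hXtb_ne
    rwa [natDegree_X_pow_sub_C] at this
  have hdegE_le : (minpoly F b).natDegree ≤ n := by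
    exact natDegree_le_of_dvd (minpoly.dvd F b hβ) hf0
  -- restrict scalars: K over F is F(β)
  have hresK : K.restrictScalars F = F⟮β⟯ := by
    rw [hK, hE, adjoin_adjoin_left]
    apply le_antisymm
    · rw [adjoin_le_iff, Set.union_subset_iff, Set.singleton_subset_iff,
        Set.singleton_subset_iff]
      exact ⟨pow_mem (mem_adjoin_simple_self F β) t, mem_adjoin_simple_self F β⟩
    · exact adjoin.mono _ _ _ Set.subset_union_right
  have hfinrankKF : Module.finrank F K = n * t := by
    have h1 : Module.finrank F (K.restrictScalars F) = n * t := by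
      rw [hresK, adjoin.finrank hintβ, hmβ]
    exact h1
  have htower : Module.finrank F E * Module.finrank E K = n * t := by
    rw [Module.finrank_mul_finrank, hfinrankKF]
  have hfinE : Module.finrank F E = (minpoly F b).natDegree := adjoin.finrank hintb
  have hfinEK : Module.finrank E K = (minpoly E β).natDegree := adjoin.finrank hintβE
  have hEn1 : Module.finrank F E = n := by
    refine le_antisymm (hfinE ▸ hdegE_le) ?_
    have h1 : n * t ≤ Module.finrank F E * t := by
      calc n * t = Module.finrank F E * Module.finrank E K := htower.symm
      _ ≤ Module.finrank F E * t := Nat.mul_le_mul_left _ (hfinEK ▸ hdegEK_le)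
    exact Nat.le_of_mul_le_mul_right h1 ht
  have hEn2 : Module.finrank E K = t := by
    rw [hEn1] at htower
    exact Nat.eq_of_mul_eq_mul_left hnpos htower
  -- minpoly E β = X^t - C bE, irreducible
  have hminE : minpoly E β = X ^ t - C bE := by
    refine eq_of_monic_of_associated (minpoly.monic hintβE) (monic_X_pow_sub_C bE ht.ne') ?_
    refine associated_of_dvd_of_natDegree_le hdvdβE hXtb_ne ?_
    rw [natDegree_X_pow_sub_C, ← hfinEK, hEn2]
  have hirrE : Irreducible (X ^ t - C bE) := hminE ▸ minpoly.irreducible hintβE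
  have hcondE : ∀ p : ℕ, p.Prime → p ∣ t → ∀ c : E, c ^ p ≠ bE :=
    fun p hp hpt c => pow_ne_of_irreducible_X_pow_sub_C hirrE hpt hp.ne_one c
  -- -1 is a square in E when t is even
  have hsqE : Even t → IsSquare (-1 : E) := by
    intro hte
    have : FiniteDimensional F E := adjoin.finiteDimensional hintb
    have : Finite E := Module.finite_of_finite F
    have : Fintype E := Fintype.ofFinite E
    have hcard : Fintype.card E = Fintype.card F ^ n := by
      rw [Module.card_eq_pow_finrank (K := F) (V := E), hEn1]
    rw [FiniteField.isSquare_neg_one_iff]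
    obtain ⟨k, hk⟩ := h4 hte
    have h2 : 1 < Fintype.card E := Fintype.one_lt_card
    omega
  -- norm of βK
  have hnormβ : Algebra.norm E βK = (-1) ^ (t + 1) * bE := by
    rw [hβK, ← IntermediateField.adjoin.powerBasis_gen hintβE,
      Algebra.PowerBasis.norm_gen_eq_coeff_zero_minpoly]
    simp only [IntermediateField.adjoin.powerBasis_gen]
    rw [IntermediateField.minpoly_gen]
    simp only [hminE, natDegree_X_pow_sub_C, coeff_sub, coeff_X_pow, coeff_C_zero,
      if_neg (show ¬ (0 = t) by omega), pow_succ]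
    rw [show (adjoin.powerBasis hintβE).dim = (minpoly (↥E) β).natDegree from rfl,
      hminE, natDegree_X_pow_sub_C]
    ring
  -- conditions on βK over K
  have hcondK : ∀ p : ℕ, p.Prime → p ∣ t → ∀ c : K, c ^ p ≠ βK := by
    intro p hp hpt c hc
    have hNc : (Algebra.norm E c) ^ p = (-1) ^ (t + 1) * bE := by
      rw [← map_pow, hc, hnormβ]
    rcases Nat.even_or_odd t with hte | hto
    · have h2 : (Algebra.norm E c) ^ p = -bE := by
        rw [hNc, (hte.add_one).neg_one_pow]; ring
      rcases hp.eq_two_or_odd' with rfl | hpodd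
      · obtain ⟨i, hi2⟩ := hsqE hte
        refine hcondE 2 Nat.prime_two hpt (i * Algebra.norm E c) ?_
        calc (i * Algebra.norm E c) ^ 2 = (i * i) * (Algebra.norm E c) ^ 2 := by ring
        _ = bE := by rw [← hi2, h2]; ring
      · refine hcondE p hp hpt (-(Algebra.norm E c)) ?_
        rw [hpodd.neg_pow, h2, neg_neg]
    · refine hcondE p hp hpt (Algebra.norm E c) ?_
      rw [hNc, (hto.add_one).neg_one_pow, one_mul]
  have hsqK : Even t → IsSquare (-1 : K) := fun hte => aux_sq_neg_one_map' (hsqE hte)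
  have hirrK : Irreducible (X ^ t - C βK) :=
    aux_X_pow_sub_C_irreducible ht.ne' hsqK hcondK
  -- γ with γ^t = β
  obtain ⟨γ, hγ⟩ := IsAlgClosed.exists_pow_nat_eq (k := Ω) β ht
  have haevγ : aeval γ (X ^ t - C βK : Polynomial K) = 0 := by
    rw [map_sub, map_pow, aeval_X, aeval_C, AdjoinSimple.algebraMap_gen, hγ, sub_self]
  have hminK : minpoly K γ = X ^ t - C βK :=
    (minpoly.eq_of_irreducible_of_monic hirrK haevγ (monic_X_pow_sub_C βK ht.ne')).symm
  have hintγK : IsIntegral K γ := ⟨X ^ t - C βK, monic_X_pow_sub_C βK ht.ne', haevγ⟩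
  set L : IntermediateField K Ω := K⟮γ⟯ with hL
  have hfinKL : Module.finrank K L = t := by
    rw [adjoin.finrank hintγK, hminK, natDegree_X_pow_sub_C]
  -- L over F is F(γ)
  have hresL1 : L.restrictScalars E = E⟮γ⟯ := by
    rw [hL, hK, adjoin_adjoin_left]
    apply le_antisymm
    · rw [adjoin_le_iff, Set.union_subset_iff, Set.singleton_subset_iff,
        Set.singleton_subset_iff]
      exact ⟨hγ ▸ pow_mem (mem_adjoin_simple_self E γ) t, mem_adjoin_simple_self E γ⟩
    · exact adjoin.mono _ _ _ Set.subset_union_right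
  have hresL2 : (E⟮γ⟯ : IntermediateField E Ω).restrictScalars F = F⟮γ⟯ := by
    rw [hE, adjoin_adjoin_left]
    apply le_antisymm
    · rw [adjoin_le_iff, Set.union_subset_iff, Set.singleton_subset_iff,
        Set.singleton_subset_iff]
      refine ⟨?_, mem_adjoin_simple_self F γ⟩
      have : γ ^ (t * t) ∈ F⟮γ⟯ := pow_mem (mem_adjoin_simple_self F γ) _
      rwa [pow_mul, hγ, ← hb] at this
    · exact adjoin.mono _ _ _ Set.subset_union_right
  have hintγ : IsIntegral F γ := by
    refine isAlgebraic_iff_isIntegral.mp ⟨Polynomial.expand F (t * t) f, ?_, ?_⟩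
    · rw [Ne, Polynomial.expand_eq_zero (by positivity)]
      exact hf0
    · rw [expand_aeval, pow_mul, hγ, ← hb]
      exact hβ
  have hfinEL : Module.finrank (↥E) ((↥E)⟮γ⟯ : IntermediateField (↥E) Ω) = t * t := by
    rw [← hresL1, aux_finrank_restrict, ← Module.finrank_mul_finrank (↥E) (↥K) (↥L),
      hEn2, hfinKL]
  have hfinFγ : Module.finrank F F⟮γ⟯ = n * t * t := by
    rw [← hresL2, aux_finrank_restrict (F := F),
      ← Module.finrank_mul_finrank F (↥E) (↥((↥E)⟮γ⟯ : IntermediateField (↥E) Ω)),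
      hEn1, hfinEL]
    ring
  -- conclude
  have hdvd : minpoly F γ ∣ Polynomial.expand F (t * t) f := by
    refine minpoly.dvd F γ ?_
    rw [expand_aeval, pow_mul, hγ, ← hb]
    exact hβ
  have hexp0' : Polynomial.expand F (t * t) f ≠ 0 := by
    rw [Ne, Polynomial.expand_eq_zero (by positivity)]
    exact hf0
  have hassoc : Associated (minpoly F γ) (Polynomial.expand F (t * t) f) := by
    refine associated_of_dvd_of_natDegree_le hdvd hexp0' ?_
    rw [natDegree_expand, ← adjoin.finrank hintγ, hfinFγ, ← hn]
    ring_nf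
    exact le_refl _
  exact hassoc.irreducible (minpoly.irreducible hintγ)

theorem stmt4 {F : Type*} [Field F] [Fintype F] (f : Polynomial F) (n t : ℕ)
    (hn : f.natDegree = n) (ht : 0 < t) (h4 : Even t → 4 ∣ (Fintype.card F ^ n - 1))
    (h : Irreducible (Polynomial.expand F t f)) :
    ∀ r : ℕ, Irreducible (Polynomial.expand F (t ^ r) f) := by
  subst hn
  intro r
  induction r with
  | zero => simpa [Polynomial.expand_one] using of_irreducible_expand ht.ne' h
  | succ r ih =>
    rcases Nat.eq_zero_or_pos r with rfl | hr
    · simpa using h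
    · obtain ⟨s, rfl⟩ : ∃ s, r = s + 1 := ⟨r - 1, by omega⟩
      have h4' : Even t → 4 ∣ (Fintype.card F ^ (Polynomial.expand F (t ^ s) f).natDegree - 1) := by
        intro hte
        rw [natDegree_expand]
        have hdvd : Fintype.card F ^ f.natDegree - 1 ∣
            Fintype.card F ^ (f.natDegree * t ^ s) - 1 := by
          have := Nat.sub_dvd_pow_sub_pow (Fintype.card F ^ f.natDegree) 1 (t ^ s)
          rwa [one_pow, ← pow_mul] at this
        exact (h4 hte).trans hdvd
      have hexp : Irreducible (Polynomial.expand F t (Polynomial.expand F (t ^ s) f)) := by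
        rw [Polynomial.expand_expand]
        have : t * t ^ s = t ^ (s + 1) := by rw [pow_succ]; ring
        rwa [this]
      have := aux_key (Polynomial.expand F (t ^ s) f) t ht h4' hexp
      rw [Polynomial.expand_expand] at this
      have heq : t * t * t ^ s = t ^ (s + 1 + 1) := by rw [pow_succ, pow_succ]; ring
      rwa [heq] at this
end

section
/- Let q be an odd prime power with q ≡ 3 (mod 4), and let c ∈ F_q be a nonsquare such that 1 − c is also a nonsquare. Let λ ∈ F_{q^2} with λ^2 = c and let r(x) = x + 1 − √(1−c) ∈ F_{q^2}[x] be a linear factor of x^2 + 2x + c over F_{q^2}. Then r(λ)·r(−λ) = 2(1 − c − √(1−c)) is not a square in F_{q^2}. -/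
theorem stmt14 {F K : Type*} [Field F] [Fintype F] [Field K] [Fintype K] [Algebra F K]
    (hcard : Fintype.card K = Fintype.card F ^ 2) (hq : Fintype.card F % 4 = 3)
    (c : F) (hc : ¬ IsSquare c) (h1c : ¬ IsSquare (1 - c))
    (l μ : K) (hl : l ^ 2 = algebraMap F K c) (hμ : μ ^ 2 = algebraMap F K (1 - c)) :
    (l + 1 - μ) * (-l + 1 - μ) = 2 * (1 - algebraMap F K c - μ) ∧
    ¬ IsSquare ((l + 1 - μ) * (-l + 1 - μ)) := by
  classical
  have hA : Function.Injective (algebraMap F K) := (algebraMap F K).injective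
  have hμ' : μ ^ 2 = 1 - algebraMap F K c := by rw [hμ, map_sub, map_one]
  have heq : (l + 1 - μ) * (-l + 1 - μ) = 2 * (1 - algebraMap F K c - μ) := by
    linear_combination hμ' - hl
  refine ⟨heq, ?_⟩
  rw [heq]
  -- basic parity facts
  have hq2 : Fintype.card F % 2 = 1 := by omega
  have hF2 : ringChar F ≠ 2 := by
    intro h
    have := FiniteField.even_card_iff_char_two.mp h
    omega
  have hK2 : ringChar K ≠ 2 := by
    intro h
    have h2 := FiniteField.even_card_iff_char_two.mp h
    rw [hcard, Nat.pow_mod, hq2] at h2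
    simp at h2
  have hc0 : c ≠ 0 := fun h => hc (h ▸ IsSquare.zero)
  have h1c0 : (1 : F) - c ≠ 0 := fun h => h1c (h ▸ IsSquare.zero)
  -- μ is not in the image of F
  have hμrange : ∀ a : F, algebraMap F K a ≠ μ := by
    intro a ha
    apply h1c
    have h2 : a ^ 2 = 1 - c := hA (by rw [map_pow, ha, hμ'] ; rw [map_sub, map_one])
    exact ⟨a, by rw [← h2, sq]⟩
  -- Frobenius
  set p := ringChar F with hp
  haveI hpK : CharP F p := ringChar.charP F
  haveI hfact : Fact p.Prime := ⟨CharP.char_is_prime F p⟩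
  obtain ⟨n, -, hn⟩ := FiniteField.card F p
  haveI : CharP K p := charP_of_injective_algebraMap hA p
  haveI : ExpChar K p := ExpChar.prime hfact.out
  set φ := iterateFrobenius K p (n : ℕ) with hφdef
  have hφ : ∀ x : K, φ x = x ^ Fintype.card F := fun x => by
    rw [hφdef, iterateFrobenius_def, ← hn]
  have Aq : ∀ a : F, (algebraMap F K a) ^ Fintype.card F = algebraMap F K a := fun a => by
    rw [← map_pow, FiniteField.pow_card]
  -- every fixed point of x ↦ x^q lies in the image of F
  have hfix : ∀ x : K, x ^ Fintype.card F = x → ∃ a : F, algebraMap F K a = x := by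
    intro x hx
    by_contra hcon
    push_neg at hcon
    set P : Polynomial K := Polynomial.X ^ (Fintype.card F) - Polynomial.X with hP
    have hq1 : 1 < Fintype.card F := by omega
    have hP0 : P ≠ 0 := by
      intro h
      have hcoeff : P.coeff (Fintype.card F) = 1 := by
        simp [hP, Polynomial.coeff_X_pow, Polynomial.coeff_X]
        omega
      rw [h] at hcoeff
      simp at hcoeff
    have hdeg : P.natDegree ≤ Fintype.card F := by
      refine le_trans (Polynomial.natDegree_sub_le _ _) ?_
      simp [Polynomial.natDegree_X_pow, Polynomial.natDegree_X]
      omega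
    have hroot : ∀ y : K, y ^ Fintype.card F = y → y ∈ P.roots.toFinset := by
      intro y hy
      rw [Multiset.mem_toFinset, Polynomial.mem_roots hP0]
      simp [hP, Polynomial.IsRoot, hy]
    set T : Finset K := insert x (Finset.univ.image (algebraMap F K)) with hT
    have hTsub : T ⊆ P.roots.toFinset := by
      intro y hy
      rw [hT, Finset.mem_insert] at hy
      rcases hy with rfl | hy
      · exact hroot _ hx
      · obtain ⟨a, -, rfl⟩ := Finset.mem_image.mp hy
        exact hroot _ (Aq a)
    have hTcard : T.card = Fintype.card F + 1 := by
      rw [hT, Finset.card_insert_of_notMem, Finset.card_image_of_injective _ hA,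
        Finset.card_univ]
      intro h
      obtain ⟨a, -, ha⟩ := Finset.mem_image.mp h
      exact hcon a ha
    have h1 : P.roots.toFinset.card ≤ Fintype.card F := by
      refine le_trans (Multiset.toFinset_card_le _) (le_trans (Polynomial.card_roots' P) hdeg)
    have := Finset.card_le_card hTsub
    omega
  -- μ ^ q = -μ
  have hμq2 : (μ ^ Fintype.card F) ^ 2 = μ ^ 2 := by
    rw [← pow_mul, mul_comm, pow_mul, hμ, Aq]
  have hμneg : μ ^ Fintype.card F = -μ := by
    have hz : (μ ^ Fintype.card F - μ) * (μ ^ Fintype.card F + μ) = 0 := by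
      linear_combination hμq2
    rcases mul_eq_zero.mp hz with h | h
    · exfalso
      obtain ⟨a, ha⟩ := hfix μ (by linear_combination h)
      exact hμrange a ha
    · linear_combination h
  set x : K := 2 * (1 - algebraMap F K c - μ) with hx
  have h2K : (2 : K) ≠ 0 := Ring.two_ne_zero hK2
  have hx0 : x ≠ 0 := by
    intro h
    rcases mul_eq_zero.mp h with h | h
    · exact h2K h
    · exact hμrange (1 - c) (by rw [map_sub, map_one]; linear_combination h)
  -- x ^ (q+1)
  have hxq : x ^ Fintype.card F = 2 * (1 - algebraMap F K c + μ) := by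
    rw [← hφ x, hx, map_mul, map_sub, map_sub, map_one, map_ofNat, hφ, hφ, hμneg, Aq]
    ring
  have hx1 : x ^ (Fintype.card F + 1) = algebraMap F K (4 * (c ^ 2 - c)) := by
    rw [pow_succ, hxq, hx, map_mul, map_sub, map_pow, map_ofNat]
    linear_combination (-4 : K) * hμ'
  -- power computations in F
  set e := Fintype.card F / 2 with he'
  have hce : c ^ e = -1 := by
    rcases FiniteField.pow_dichotomy hF2 hc0 with h | h
    · exact absurd ((FiniteField.isSquare_iff hF2 hc0).mpr h) hc
    · exact h
  have h1ce : (1 - c) ^ e = -1 := by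
    rcases FiniteField.pow_dichotomy hF2 h1c0 with h | h
    · exact absurd ((FiniteField.isSquare_iff hF2 h1c0).mpr h) h1c
    · exact h
  have hne : (-1 : F) ^ e = -1 := by
    rcases FiniteField.pow_dichotomy hF2 (a := -1) (by simp) with h | h
    · exact absurd ((FiniteField.isSquare_iff hF2 (by simp)).mpr h)
        (fun hs => FiniteField.isSquare_neg_one_iff.mp hs hq)
    · exact h
  have h2F : (2 : F) ≠ 0 := Ring.two_ne_zero hF2
  have h4 : (2 : F) ^ e * (2 : F) ^ e = 1 := by
    rcases FiniteField.pow_dichotomy hF2 h2F with h | h <;> rw [h] <;> ring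
  have hd : (4 * (c ^ 2 - c) : F) ^ e = -1 := by
    rw [show (4 * (c ^ 2 - c) : F) = 2 * 2 * -1 * (c * (1 - c)) by ring,
      mul_pow, mul_pow, mul_pow, mul_pow, h4, hne, hce, h1ce]
    norm_num
  -- exponent arithmetic
  have he : Fintype.card K / 2 = (Fintype.card F + 1) * e := by
    obtain ⟨k, hk⟩ : ∃ k, Fintype.card F = 2 * k + 1 := ⟨Fintype.card F / 2, by omega⟩
    have hek : e = k := by omega
    rw [hcard, hk, hek]
    have h1 : (2 * k + 1) ^ 2 = 2 * ((2 * k + 1 + 1) * k) + 1 := by ring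
    rw [h1, Nat.mul_add_div (by norm_num)]
    simp
  have key : x ^ (Fintype.card K / 2) = -1 := by
    rw [he, pow_mul, hx1, ← map_pow, hd, map_neg, map_one]
  intro hsq
  rw [FiniteField.isSquare_iff hK2 hx0] at hsq
  rw [key] at hsq
  exact Ring.neg_one_ne_one_of_char_ne_two hK2 hsq
end

section
/- Let q be odd, c ∈ F_q a nonsquare, and λ ∈ F_{q^2} with λ^2 = c. Let g ∈ F_q[x] have degree n with g(−λ) ≠ 0. Define McNay's transform g^T_c(x) = (2x)^n g((x^2+c)/(2x)) and, for σ = [[λ,λ],[−1,1]] ∈ GL_2(F_{q^2}), the transform g^{R_{σ,2}} = P_{σ^{-1}}(S_2(P_σ(g))). Then g^T_c(x) = (2λ)^n · g^{R_{σ,2}}(x). -/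
open Polynomial

noncomputable def Ptrans {F : Type*} [Field F] (a b c d : F) (f : Polynomial F) : Polynomial F :=
  ∑ i ∈ Finset.range (f.natDegree + 1),
    C (f.coeff i) * (C a * X + C b) ^ i * (C c * X + C d) ^ (f.natDegree - i)

noncomputable def Rst {F : Type*} [Field F] (t : ℕ) (a b c d : F) (g : Polynomial F) :
    Polynomial F :=
  Ptrans (d / (a * d - b * c)) (-b / (a * d - b * c)) (-c / (a * d - b * c)) (a / (a * d - b * c))
    (Polynomial.expand F t (Ptrans a b c d g))

/-- McNay's transform `g^T_c(x) = (2x)^{deg g} · g((x²+c)/(2x))`, with cleared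
denominators: `∑ gᵢ (x²+c)^i (2x)^{n-i}`. -/
noncomputable def mcNay {F : Type*} [Field F] (c : F) (g : Polynomial F) : Polynomial F :=
  ∑ i ∈ Finset.range (g.natDegree + 1),
    C (g.coeff i) * (X ^ 2 + C c) ^ i * (2 * X) ^ (g.natDegree - i)

lemma sumPow_algebraMap {K : Type*} [Field K] (P A B : Polynomial K) (m : ℕ)
    (hm : P.natDegree ≤ m) (hB : B ≠ 0) :
    algebraMap (Polynomial K) (RatFunc K)
        (∑ i ∈ Finset.range (m + 1), C (P.coeff i) * A ^ i * B ^ (m - i))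
      = algebraMap (Polynomial K) (RatFunc K) B ^ m *
        aeval (algebraMap (Polynomial K) (RatFunc K) A /
          algebraMap (Polynomial K) (RatFunc K) B) P := by
  have hBι : algebraMap (Polynomial K) (RatFunc K) B ≠ 0 := by
    simpa using (map_ne_zero_iff _ (RatFunc.algebraMap_injective K)).mpr hB
  rw [aeval_eq_sum_range' (Nat.lt_succ_of_le hm), map_sum, Finset.mul_sum]
  refine Finset.sum_congr rfl fun i hi => ?_
  have hi' : i ≤ m := Nat.lt_succ_iff.mp (Finset.mem_range.mp hi)
  rw [map_mul, map_mul, map_pow, map_pow, RatFunc.algebraMap_C, Algebra.smul_def,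
    RatFunc.algebraMap_eq_C, div_pow, ← pow_sub_mul_pow
      (algebraMap (Polynomial K) (RatFunc K) B) hi']
  have hBi : algebraMap (Polynomial K) (RatFunc K) B ^ i ≠ 0 := pow_ne_zero _ hBι
  field_simp

lemma natDegree_Ptrans {K : Type*} [Field K] (l : K) (hl : l ≠ 0) (G : Polynomial K)
    (hroot : G.eval (-l) ≠ 0) : (Ptrans l l (-1) 1 G).natDegree = G.natDegree := by
  set n := G.natDegree with hn
  have hcoeff : (Ptrans l l (-1) 1 G).coeff n = (-1) ^ n * G.eval (-l) := by
    rw [Ptrans, finset_sum_coeff, eval_eq_sum_range, Finset.mul_sum]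
    refine Finset.sum_congr rfl fun i hi => ?_
    have hi' : i ≤ n := Nat.lt_succ_iff.mp (Finset.mem_range.mp hi)
    rw [mul_assoc, coeff_C_mul]
    have h1 : ((C l * X + C l) ^ i * (C (-1) * X + C 1) ^ (n - i)).coeff n
        = l ^ i * (-1) ^ (n - i) := by
      have hd1 : ((C l * X + C l) ^ i).natDegree = i := by
        rw [natDegree_pow, natDegree_linear hl, mul_one]
      have hd2 : ((C (-1) * X + C 1 : Polynomial K) ^ (n - i)).natDegree = n - i := by
        rw [natDegree_pow, natDegree_linear (by norm_num : (-1 : K) ≠ 0), mul_one]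
      have := coeff_mul_degree_add_degree ((C l * X + C l) ^ i)
        ((C (-1) * X + C 1 : Polynomial K) ^ (n - i))
      rw [hd1, hd2, Nat.add_sub_cancel' hi'] at this
      rw [this, leadingCoeff_pow, leadingCoeff_pow, leadingCoeff_linear hl,
        leadingCoeff_linear (by norm_num : (-1 : K) ≠ 0)]
    rw [h1, ← pow_sub_mul_pow (-1 : K) hi', neg_pow l i]
    have h2 : ((-1 : K)) ^ (i * 2) = 1 := by
      rw [mul_comm, pow_mul, neg_one_sq, one_pow]
    linear_combination -G.coeff i * l ^ i * (-1 : K) ^ (n - i) * h2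
  have hne : (Ptrans l l (-1) 1 G).coeff n ≠ 0 := by
    rw [hcoeff]
    exact mul_ne_zero (pow_ne_zero _ (by norm_num)) hroot
  have hle : (Ptrans l l (-1) 1 G).natDegree ≤ n := by
    refine natDegree_sum_le_of_forall_le _ _ fun i hi => ?_
    have hi' : i ≤ n := Nat.lt_succ_iff.mp (Finset.mem_range.mp hi)
    calc (C (G.coeff i) * (C l * X + C l) ^ i * (C (-1) * X + C 1) ^ (n - i)).natDegree
        ≤ (C (G.coeff i) * (C l * X + C l) ^ i).natDegree
          + ((C (-1) * X + C 1 : Polynomial K) ^ (n - i)).natDegree := natDegree_mul_le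
      _ ≤ ((C (G.coeff i)).natDegree + ((C l * X + C l) ^ i).natDegree) + (n - i) := by
          gcongr
          · exact natDegree_mul_le
          · exact (natDegree_pow_le).trans
              (by simpa using Nat.mul_le_mul_left (n - i) (natDegree_linear_le (a := (-1 : K)) (b := 1)))
      _ ≤ (0 + i) + (n - i) := by
          gcongr
          · simp
          · exact (natDegree_pow_le).trans
              (by simpa using Nat.mul_le_mul_left i (natDegree_linear_le (a := l) (b := l)))
      _ ≤ n := by omega
  exact le_antisymm hle (le_natDegree_of_ne_zero hne)

theorem stmt15 {F K : Type*} [Field F] [Fintype F] [Field K] [Fintype K] [Algebra F K]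
    (hq : Odd (Fintype.card F)) (hcard : Fintype.card K = Fintype.card F ^ 2)
    (c : F) (hc : ¬ IsSquare c) (l : K) (hl : l ^ 2 = algebraMap F K c)
    (g : Polynomial F) (n : ℕ) (hn : g.natDegree = n) (hroot : aeval (-l) g ≠ 0) :
    (mcNay c g).map (algebraMap F K) =
      C ((2 * l) ^ n) * Rst 2 l l (-1) 1 (g.map (algebraMap F K)) := by

  have hinj : Function.Injective (algebraMap F K) := (algebraMap F K).injective
  set G := g.map (algebraMap F K) with hGdef
  have hGdeg : G.natDegree = n := by
    rw [hGdef, natDegree_map_eq_of_injective hinj, hn]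
  -- characteristic ≠ 2
  have h2 : (2 : K) ≠ 0 := by
    intro h
    have hd : ringChar K ∣ 2 := by
      have := (CharP.cast_eq_zero_iff K (ringChar K) 2).mp (by exact_mod_cast h)
      exact this
    have h1 : ringChar K ≠ 1 := CharP.ringChar_ne_one
    have hchar : ringChar K = 2 := by
      rcases (Nat.dvd_prime Nat.prime_two).mp hd with h' | h'
      · exact absurd h' h1
      · exact h'
    have heven := FiniteField.even_card_iff_char_two.mp hchar
    have hodd : Odd (Fintype.card K) := hcard ▸ hq.pow
    rw [Nat.odd_iff] at hodd
    omega
  have hl0 : l ≠ 0 := by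
    intro h
    apply hc
    have : algebraMap F K c = 0 := by rw [← hl, h]; ring
    have hc0 : c = 0 := by
      apply hinj; rw [this, map_zero]
    exact ⟨0, by rw [hc0]; ring⟩
  have h2l : (2 * l : K) ≠ 0 := mul_ne_zero h2 hl0
  have hrootG : G.eval (-l) ≠ 0 := by
    rw [hGdef, eval_map]
    exact fun h => hroot (by rwa [aeval_def])
  set P := Ptrans l l (-1) 1 G with hPdef
  have hP : P.natDegree = n := by rw [hPdef, natDegree_Ptrans l hl0 G hrootG, hGdeg]
  apply RatFunc.algebraMap_injective K
  rw [Rst]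
  rw [show Polynomial.expand K 2 (Ptrans l l (-1) 1 G) = Polynomial.expand K 2 P from rfl]
  set Q := Polynomial.expand K 2 P with hQdef
  have hQdeg : Q.natDegree = 2 * n := by rw [hQdef, natDegree_expand, hP]; ring
  have hc'ne : (-(-1 : K)) / (l * 1 - l * -1) ≠ 0 := by
    rw [div_ne_zero_iff]
    constructor
    · norm_num
    · intro h; apply h2l; linear_combination h
  have hB : (C ((-(-1 : K)) / (l * 1 - l * -1)) * X + C (l / (l * 1 - l * -1)) : Polynomial K) ≠ 0 := by
    intro h
    apply hc'ne
    have := congrArg (fun p => Polynomial.coeff p 1) h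
    simpa using this
  rw [map_mul, Ptrans, sumPow_algebraMap _ _ _ _ le_rfl hB, hQdeg, hQdef, expand_aeval]
  -- constant simplifications in K
  have e1 : (- -1 : K) / (l * 1 - l * -1) = 1 / (2 * l) := by
    rw [div_eq_div_iff (by intro h; exact h2l (by linear_combination h)) h2l]; ring
  have e2 : (l : K) / (l * 1 - l * -1) = 1 / 2 := by
    rw [div_eq_div_iff (by intro h; exact h2l (by linear_combination h)) h2]; ring
  have e3 : (1 : K) / (l * 1 - l * -1) = 1 / (2 * l) := by
    rw [div_eq_div_iff (by intro h; exact h2l (by linear_combination h)) h2l]; ring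
  have e4 : (-l : K) / (l * 1 - l * -1) = -(1 / 2) := by
    rw [div_eq_iff (by intro h; exact h2l (by linear_combination h))]; field_simp; ring
  rw [e1, e2, e3, e4]
  -- nonzero facts in RatFunc
  have hC2eq : RatFunc.C (2 : K) = (2 : RatFunc K) := map_ofNat _ 2
  have hRCl : RatFunc.C l ≠ 0 := by
    rw [← RatFunc.algebraMap_C]
    exact (map_ne_zero_iff _ (RatFunc.algebraMap_injective K)).mpr (by simpa using hl0)
  have h2R : (2 : RatFunc K) ≠ 0 := by
    have : RatFunc.C (2 : K) ≠ 0 := by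
      rw [← RatFunc.algebraMap_C]
      exact (map_ne_zero_iff _ (RatFunc.algebraMap_injective K)).mpr (by
        intro h
        exact h2 (by simpa using congrArg (fun p => Polynomial.coeff p 0) h))
    rwa [hC2eq] at this
  have hxl : RatFunc.X + RatFunc.C l ≠ 0 := by
    rw [← RatFunc.algebraMap_X, ← RatFunc.algebraMap_C, ← map_add]
    exact (map_ne_zero_iff _ (RatFunc.algebraMap_injective K)).mpr (X_add_C_ne_zero l)
  have hBeq : algebraMap (Polynomial K) (RatFunc K)
      (C (1 / (2 * l)) * X + C (1 / 2 : K)) = (RatFunc.X + RatFunc.C l) / (2 * RatFunc.C l) := by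
    rw [map_add, map_mul, RatFunc.algebraMap_C, RatFunc.algebraMap_C, RatFunc.algebraMap_X,
      map_div₀, map_div₀, map_one, map_mul]
    rw [hC2eq]
    field_simp
  have hAeq : algebraMap (Polynomial K) (RatFunc K)
      (C (1 / (2 * l)) * X + C (-(1 / 2) : K)) = (RatFunc.X - RatFunc.C l) / (2 * RatFunc.C l) := by
    rw [map_add, map_mul, RatFunc.algebraMap_C, RatFunc.algebraMap_C, RatFunc.algebraMap_X,
      map_div₀, map_neg, map_div₀, map_one, map_mul]
    rw [hC2eq]
    field_simp
    ring
  rw [hBeq, hAeq]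
  have h2Rl : (2 : RatFunc K) * RatFunc.C l ≠ 0 := mul_ne_zero h2R hRCl
  have hu : (RatFunc.X - RatFunc.C l) / (2 * RatFunc.C l) /
      ((RatFunc.X + RatFunc.C l) / (2 * RatFunc.C l))
      = (RatFunc.X - RatFunc.C l) / (RatFunc.X + RatFunc.C l) := by
    rw [div_div_div_cancel_right₀]
    exact h2Rl
  rw [hu]
  rw [hPdef, Ptrans, map_sum, hGdeg]
  simp only [map_mul, map_pow, map_add, aeval_C, aeval_X, RatFunc.algebraMap_eq_C]
  conv_lhs => rw [mcNay, hn, Polynomial.map_sum, map_sum]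
  simp only [Polynomial.map_mul, Polynomial.map_pow, Polynomial.map_add, Polynomial.map_ofNat,
    Polynomial.map_C, Polynomial.map_X, map_mul, map_pow, map_add, map_ofNat,
    RatFunc.algebraMap_C, RatFunc.algebraMap_X, RatFunc.algebraMap_C]
  rw [Finset.mul_sum, Finset.mul_sum]
  refine Finset.sum_congr rfl fun i hi => ?_
  have hi' : i ≤ n := Nat.lt_succ_iff.mp (Finset.mem_range.mp hi)
  obtain ⟨j, rfl⟩ : ∃ j, n = i + j := ⟨n - i, by omega⟩
  rw [hGdef, coeff_map, ← hl, map_pow, map_neg, map_one, Nat.add_sub_cancel_left]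
  set xR : RatFunc K := RatFunc.X
  set lR : RatFunc K := RatFunc.C l
  set A := (xR + lR) ^ 2 / (2 * lR) ^ 2 with hA
  set S := (xR ^ 2 + lR ^ 2) / (xR + lR) ^ 2 with hS
  set T := 2 * xR / (xR + lR) ^ 2 with hT
  clear_value A S T
  have key0 : ((xR + lR) / (2 * lR)) ^ (2 * (i + j)) = A ^ i * A ^ j := by
    rw [hA, ← div_pow, Nat.mul_add, pow_add]
    simp only [pow_mul]
  have key1 : lR * ((xR - lR) / (xR + lR)) ^ 2 + lR = 2 * lR * S := by
    rw [hS]; field_simp; ring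
  have key2 : -1 * ((xR - lR) / (xR + lR)) ^ 2 + 1 = 2 * lR * T := by
    rw [hT]; field_simp; ring
  rw [key0, key1, key2]
  have hC1 : 2 * lR * A * (2 * lR * S) = xR ^ 2 + lR ^ 2 := by
    rw [hA, hS]; field_simp
  have hC2 : 2 * lR * A * (2 * lR * T) = 2 * xR := by
    rw [hA, hT]; field_simp
  calc RatFunc.C ((algebraMap F K) (g.coeff i)) * (xR ^ 2 + lR ^ 2) ^ i * (2 * xR) ^ j
      = RatFunc.C ((algebraMap F K) (g.coeff i)) * (2 * lR * A * (2 * lR * S)) ^ i *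
        (2 * lR * A * (2 * lR * T)) ^ j := by
        rw [hC1, hC2]
    _ = (2 * lR) ^ (i + j) * (A ^ i * A ^ j *
          (RatFunc.C ((algebraMap F K) (g.coeff i)) * (2 * lR * S) ^ i * (2 * lR * T) ^ j)) := by
        rw [pow_add, mul_pow, mul_pow]
        ring_nf
        rw [show (4 : RatFunc K) = 2 ^ 2 by norm_num, ← pow_mul, Nat.mul_comm 2 j]
end
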